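/- Let K be a field of characteristic not 2 and let R be a standard graded K-algebra with dim R_1 = 2, dim R_2 = 1, R_i = 0 for i ≥ 3, defined by quadrics (Hilbert series 1 + 2x + x^2), over K algebraically closed. Then there exist linearly independent t, w ∈ R_1 with t^2 = 0 and w^2 = 0. -/

import Mathlib

open MvPolynomial

noncomputable def piece {K : Type*} [Field K] {n : ℕ} (I : Ideal (MvPolynomial (Fin n) K))
    (i : ℕ) : Submodule K (MvPolynomial (Fin n) K ⧸ I) :=
  (MvPolynomial.homogeneousSubmodule (Fin n) K i).map (Ideal.Quotient.mkₐ K I).toLinearMap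

lemma mono_eq {K : Type*} [Field K] (m : Fin 2 →₀ ℕ) :
    (monomial m (1:K)) = X 0 ^ (m 0) * X 1 ^ (m 1) := by
  rw [monomial_eq, C_1, one_mul, Finsupp.prod_fintype, Fin.prod_univ_two]
  intro i; exact pow_zero _

lemma span_one {K : Type*} [Field K] (p : MvPolynomial (Fin 2) K) (hp : p.IsHomogeneous 1) :
    p ∈ Submodule.span K ({X 0, X 1} : Set (MvPolynomial (Fin 2) K)) := by
  rw [p.as_sum]
  apply Submodule.sum_mem
  intro v hv
  have hd : v 0 + v 1 = 1 := by
    have := hp (mem_support_iff.mp hv)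
    simpa [Finsupp.weight_apply, Finsupp.sum_fintype, Fin.sum_univ_two] using this
  have h : monomial v (coeff v p) = coeff v p • monomial v 1 := by
    rw [smul_monomial, smul_eq_mul, mul_one]
  rw [h]
  apply Submodule.smul_mem
  apply Submodule.subset_span
  rw [mono_eq]
  rcases (by omega : (v 0 = 1 ∧ v 1 = 0) ∨ (v 0 = 0 ∧ v 1 = 1)) with ⟨h0, h1⟩ | ⟨h0, h1⟩ <;>
    simp [h0, h1]

lemma span_two {K : Type*} [Field K] (p : MvPolynomial (Fin 2) K) (hp : p.IsHomogeneous 2) :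
    p ∈ Submodule.span K ({X 0 * X 0, X 0 * X 1, X 1 * X 1} : Set (MvPolynomial (Fin 2) K)) := by
  rw [p.as_sum]
  apply Submodule.sum_mem
  intro v hv
  have hd : v 0 + v 1 = 2 := by
    have := hp (mem_support_iff.mp hv)
    simpa [Finsupp.weight_apply, Finsupp.sum_fintype, Fin.sum_univ_two] using this
  have h : monomial v (coeff v p) = coeff v p • monomial v 1 := by
    rw [smul_monomial, smul_eq_mul, mul_one]
  rw [h]
  apply Submodule.smul_mem
  apply Submodule.subset_span
  rw [mono_eq]
  rcases (by omega : (v 0 = 2 ∧ v 1 = 0) ∨ (v 0 = 1 ∧ v 1 = 1) ∨ (v 0 = 0 ∧ v 1 = 2))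
      with ⟨h0, h1⟩ | ⟨h0, h1⟩ | ⟨h0, h1⟩ <;>
    simp [h0, h1, pow_two]

set_option maxHeartbeats 2000000 in
set_option synthInstance.maxHeartbeats 1000000 in
theorem stmt19 {K : Type*} [Field K] [IsAlgClosed K] (h2 : (2 : K) ≠ 0)
    (I : Ideal (MvPolynomial (Fin 2) K))
    (hquad : ∃ Q : Set (MvPolynomial (Fin 2) K),
      (∀ q ∈ Q, q.IsHomogeneous 2) ∧ I = Ideal.span Q)
    (hH1 : Module.finrank K (piece I 1) = 2)
    (hH2 : Module.finrank K (piece I 2) = 1)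
    (hH3 : ∀ i, 3 ≤ i → piece I i = ⊥) :
    ∃ t ∈ piece I 1, ∃ w ∈ piece I 1,
      LinearIndependent K ![t, w] ∧ t ^ 2 = 0 ∧ w ^ 2 = 0 := by
  obtain ⟨Q, hQhom, hQspan⟩ := hquad
  set π := Ideal.Quotient.mkₐ K I with hπdef
  have hmk : ∀ (i : ℕ) (p : MvPolynomial (Fin 2) K), p.IsHomogeneous i → π p ∈ piece I i := by
    intro i p hp
    have := Submodule.mem_map_of_mem (f := π.toLinearMap)
      ((mem_homogeneousSubmodule i p).mpr hp)
    exact this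
  set t₀ := π (X 0) with ht₀def
  set w₀ := π (X 1) with hw₀def
  have hX0h : (X 0 : MvPolynomial (Fin 2) K).IsHomogeneous 1 := isHomogeneous_X _ _
  have hX1h : (X 1 : MvPolynomial (Fin 2) K).IsHomogeneous 1 := isHomogeneous_X _ _
  have ht₀ : t₀ ∈ piece I 1 := hmk 1 _ hX0h
  have hw₀ : w₀ ∈ piece I 1 := hmk 1 _ hX1h
  set u := π (X 0 * X 0) with hudef
  set v := π (X 0 * X 1) with hvdef
  set z := π (X 1 * X 1) with hzdef
  have hu2 : u ∈ piece I 2 := hmk 2 _ (hX0h.mul hX0h)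
  have hv2 : v ∈ piece I 2 := hmk 2 _ (hX0h.mul hX1h)
  have hz2 : z ∈ piece I 2 := hmk 2 _ (hX1h.mul hX1h)
  -- a generator of piece I 2
  obtain ⟨g', hg'0, hg'⟩ := finrank_eq_one_iff'.mp hH2
  set g : MvPolynomial (Fin 2) K ⧸ I := (g' : MvPolynomial (Fin 2) K ⧸ I) with hgdef
  have hg0 : g ≠ 0 := fun h => hg'0 (Subtype.ext h)
  obtain ⟨α, hα⟩ := hg' ⟨u, hu2⟩
  obtain ⟨β, hβ⟩ := hg' ⟨v, hv2⟩
  obtain ⟨γ, hγ⟩ := hg' ⟨z, hz2⟩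
  have hαu : u = α • g := congrArg Subtype.val hα.symm
  have hβv : v = β • g := congrArg Subtype.val hβ.symm
  have hγz : z = γ • g := congrArg Subtype.val hγ.symm
  -- the squaring identity
  have key : ∀ a b : K, (a • t₀ + b • w₀) ^ 2 = (a ^ 2 * α + 2 * a * b * β + b ^ 2 * γ) • g := by
    intro a b
    have expand : (a • t₀ + b • w₀) ^ 2 = (a ^ 2) • u + (2 * a * b) • v + (b ^ 2) • z := by
      rw [ht₀def, hw₀def, hudef, hvdef, hzdef]
      calc (a • π (X 0) + b • π (X 1)) ^ 2
          = π ((a • X 0 + b • X 1) ^ 2) := by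
            rw [map_pow, map_add, map_smul, map_smul]
        _ = π ((a ^ 2) • (X 0 * X 0) + ((2 * a * b) • (X 0 * X 1)
              + (b ^ 2) • (X 1 * X 1))) := by
            congr 1
            simp only [smul_eq_C_mul, C_mul, C_pow, map_ofNat]
            ring
        _ = _ := by
            rw [map_add, map_add, map_smul, map_smul, map_smul, ← add_assoc]
    rw [expand, hαu, hβv, hγz, smul_smul, smul_smul, smul_smul, ← add_smul, ← add_smul]
  -- independence of t₀, w₀
  have hspan : piece I 1 = Submodule.span K {t₀, w₀} := by
    apply le_antisymm
    · rintro x ⟨p, hp, rfl⟩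
      have hps := span_one p ((mem_homogeneousSubmodule _ _).mp hp)
      have hmem : π.toLinearMap p ∈
          Submodule.map π.toLinearMap (Submodule.span K {X 0, X 1}) :=
        Submodule.mem_map_of_mem hps
      rw [Submodule.map_span, Set.image_insert_eq, Set.image_singleton] at hmem
      exact hmem
    · rw [Submodule.span_le]
      rintro x hx
      rcases hx with rfl | rfl
      · exact ht₀
      · exact hw₀
  have hind0 : LinearIndependent K ![t₀, w₀] := by
    rw [linearIndependent_iff_card_eq_finrank_span]
    have hr : Set.range ![t₀, w₀] = {t₀, w₀} := by
      ext x
      simp only [Set.mem_range, Fin.exists_fin_two, Matrix.cons_val_zero, Matrix.cons_val_one,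
        Matrix.head_cons, Set.mem_insert_iff, Set.mem_singleton_iff]
      tauto
    rw [Set.finrank, hr, ← hspan, hH1]
    rfl
  -- building solutions from roots of the quadratic form
  have build : ∀ a b c d : K, a * d - b * c ≠ 0 →
      a ^ 2 * α + 2 * a * b * β + b ^ 2 * γ = 0 →
      c ^ 2 * α + 2 * c * d * β + d ^ 2 * γ = 0 →
      ∃ t ∈ piece I 1, ∃ w ∈ piece I 1,
        LinearIndependent K ![t, w] ∧ t ^ 2 = 0 ∧ w ^ 2 = 0 := by
    intro a b c d hdet h1 h2'
    refine ⟨a • t₀ + b • w₀,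
      Submodule.add_mem _ (Submodule.smul_mem _ _ ht₀) (Submodule.smul_mem _ _ hw₀),
      c • t₀ + d • w₀,
      Submodule.add_mem _ (Submodule.smul_mem _ _ ht₀) (Submodule.smul_mem _ _ hw₀),
      ?_, by rw [key a b, h1, zero_smul], by rw [key c d, h2', zero_smul]⟩
    rw [LinearIndependent.pair_iff]
    intro s r hsr
    have hcomb : (s * a + r * c) • t₀ + (s * b + r * d) • w₀ = 0 := by
      rw [← hsr]
      module
    obtain ⟨e1, e2⟩ := LinearIndependent.pair_iff.mp hind0 _ _ hcomb
    constructor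
    · have hs0 : s * (a * d - b * c) = 0 := by linear_combination d * e1 - c * e2
      rcases mul_eq_zero.mp hs0 with h | h
      · exact h
      · exact absurd h hdet
    · have hr0 : r * (a * d - b * c) = 0 := by linear_combination a * e2 - b * e1
      rcases mul_eq_zero.mp hr0 with h | h
      · exact h
      · exact absurd h hdet
  -- everything in I vanishes at a point compatible with the quadratic relations
  have main : ∀ pt : Fin 2 → K,
      (∀ c₀ c₁ c₂ : K, c₀ * α + c₁ * β + c₂ * γ = 0 →
        c₀ * (pt 0) ^ 2 + c₁ * ((pt 0) * (pt 1)) + c₂ * (pt 1) ^ 2 = 0) →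
      ∀ f ∈ I, eval pt f = 0 := by
    intro pt hpt f hf
    have hle : I ≤ RingHom.ker (eval pt) := by
      rw [hQspan, Ideal.span_le]
      intro q hq
      have hqh := hQhom q hq
      have hqI : q ∈ I := hQspan ▸ Ideal.subset_span hq
      have hq0 : π q = 0 := by
        rw [hπdef, Ideal.Quotient.mkₐ_eq_mk, Ideal.Quotient.eq_zero_iff_mem]
        exact hqI
      have hsp := span_two q hqh
      rw [Submodule.mem_span_insert] at hsp
      obtain ⟨c₀, y, hy, hqeq⟩ := hsp
      rw [Submodule.mem_span_pair] at hy
      obtain ⟨c₁, c₂, hyeq⟩ := hy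
      rw [hqeq, ← hyeq] at hq0 ⊢
      have hpi : (c₀ * α + (c₁ * β + c₂ * γ)) • g = 0 := by
        rw [map_add, map_add, map_smul, map_smul, map_smul, ← hudef, ← hvdef, ← hzdef,
          hαu, hβv, hγz, smul_smul, smul_smul, smul_smul, ← add_smul, ← add_smul] at hq0
        exact hq0
      have hE : c₀ * α + c₁ * β + c₂ * γ = 0 := by
        rcases smul_eq_zero.mp hpi with h | h
        · linear_combination h
        · exact absurd h hg0
      have hv0 := hpt c₀ c₁ c₂ hE
      simp only [SetLike.mem_coe, RingHom.mem_ker, map_add, smul_eval, eval_mul, eval_X]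
      linear_combination hv0
    exact hle hf
  -- cubics are in I
  have hcube : ∀ j : Fin 2, (X j : MvPolynomial (Fin 2) K) ^ 3 ∈ I := by
    intro j
    have hhom : ((X j : MvPolynomial (Fin 2) K) ^ 3).IsHomogeneous 3 :=
      isHomogeneous_X_pow _ _
    have hmem : π ((X j) ^ 3) ∈ piece I 3 := hmk 3 _ hhom
    rw [hH3 3 le_rfl, Submodule.mem_bot] at hmem
    rw [hπdef, Ideal.Quotient.mkₐ_eq_mk, Ideal.Quotient.eq_zero_iff_mem] at hmem
    exact hmem
  by_cases hΔ : β ^ 2 - α * γ = 0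
  · -- degenerate discriminant
    by_cases hα0 : α = 0
    · have hβ0 : β = 0 := by
        have hsq : β ^ 2 = 0 := by linear_combination hΔ + γ * hα0
        exact pow_eq_zero_iff (two_ne_zero) |>.mp hsq
      by_cases hγ0 : γ = 0
      · -- quadratic form is zero: t₀, w₀ work
        exact build 1 0 0 1 (by norm_num) (by rw [hα0, hβ0, hγ0]; ring)
          (by rw [hα0, hβ0, hγ0]; ring)
      · -- contradiction via point (β, γ) and X1^3
        exfalso
        have h0 := main ![β, γ] (fun c₀ c₁ c₂ hE => by
          simp only [Matrix.cons_val_zero, Matrix.cons_val_one, Matrix.head_cons]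
          linear_combination γ * hE + c₀ * hΔ) _ (hcube 1)
        simp only [map_pow, eval_X, Matrix.cons_val_one, Matrix.head_cons] at h0
        exact hγ0 (pow_eq_zero_iff three_ne_zero |>.mp h0)
    · -- contradiction via point (α, β) and X0^3
      exfalso
      have h0 := main ![α, β] (fun c₀ c₁ c₂ hE => by
        simp only [Matrix.cons_val_zero, Matrix.cons_val_one, Matrix.head_cons]
        linear_combination α * hE + c₂ * hΔ) _ (hcube 0)
      simp only [map_pow, eval_X, Matrix.cons_val_zero] at h0
      exact hα0 (pow_eq_zero_iff three_ne_zero |>.mp h0)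
  · -- nondegenerate discriminant: two independent roots
    by_cases hα0 : α = 0
    · have hβ0 : β ≠ 0 := by
        intro h
        apply hΔ
        rw [h, hα0]; ring
      refine build 1 0 γ (-2 * β) ?_ (by rw [hα0]; ring) (by rw [hα0]; ring)
      intro h
      have h2β : (2 : K) * β = 0 := by linear_combination -h
      rcases mul_eq_zero.mp h2β with h' | h'
      · exact h2 h'
      · exact hβ0 h'
    · obtain ⟨s, hs⟩ := IsAlgClosed.exists_pow_nat_eq (β ^ 2 - α * γ) (n := 2) two_pos
      have hs0 : s ≠ 0 := by
        intro h
        apply hΔ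
        rw [← hs, h]; ring
      refine build (-β + s) α (-β - s) α ?_
        (by linear_combination α * hs) (by linear_combination α * hs)
      intro h
      have h' : 2 * s * α = 0 := by linear_combination h
      rcases mul_eq_zero.mp h' with h'' | h''
      · rcases mul_eq_zero.mp h'' with h3 | h3
        · exact h2 h3
        · exact hs0 h3
      · exact hα0 h''
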